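/- arXiv:1305.4139 — 4 statements merged into one kernel-verified Lean document; each statement's English description precedes it below -/
import Mathlib

section
/- Let S be a finite 2-group such that for every x in S, the centralizer C_S(x) equals the normalizer N_S(⟨x⟩). Then any two involutions of S commute, i.e., the subgroup generated by all involutions of S is elementary abelian. -/
/-- In a finite 2-group `S` with `N_S(⟨x⟩) = C_S(x)` for all `x`, any two
involutions commute. -/
theorem involutions_commute_of_normalizer_eq_centralizer
    (S : Type*) [Group S] [Finite S] (hS : IsPGroup 2 S)
    (h : ∀ x : S, Subgroup.normalizer (Subgroup.zpowers x : Set S) = Subgroup.centralizer {x}) :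
    ∀ u v : S, orderOf u = 2 → orderOf v = 2 → Commute u v := by
  intro u v hu hv
  have hu2 : u * u = 1 := by
    have := pow_orderOf_eq_one u; rw [hu] at this; simpa [sq] using this
  have hv2 : v * v = 1 := by
    have := pow_orderOf_eq_one v; rw [hv] at this; simpa [sq] using this
  have huinv : u⁻¹ = u := inv_eq_of_mul_eq_one_right hu2
  have hvinv : v⁻¹ = v := inv_eq_of_mul_eq_one_right hv2
  set t := u * v with ht
  have hconj : u * t * u⁻¹ = t⁻¹ := by
    rw [huinv, ht, mul_inv_rev, huinv, hvinv]
    calc u * (u * v) * u = (u * u) * (v * u) := by group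
    _ = v * u := by rw [hu2, one_mul]
  have key : ∀ n : ℤ, u * t ^ n * u⁻¹ = t ^ (-n) := by
    intro n
    rw [zpow_neg, ← inv_zpow, ← hconj]
    rw [show u * t * u⁻¹ = MulAut.conj u t from rfl, ← map_zpow]
    rfl
  have hmem : u ∈ Subgroup.normalizer (Subgroup.zpowers t : Set S) := by
    rw [Subgroup.mem_normalizer_iff]
    intro g
    constructor
    · rintro ⟨n, rfl⟩
      exact ⟨-n, (key n).symm⟩
    · rintro ⟨n, hn⟩
      refine ⟨-n, ?_⟩
      show t ^ (-n) = g
      have : g = u⁻¹ * (u * g * u⁻¹) * u := by group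
      rw [this, ← hn, huinv, ← key n, huinv]
  rw [h t] at hmem
  have := Subgroup.mem_centralizer_iff.mp hmem t (Set.mem_singleton t)
  -- this : t * u = u * t
  have hvu : v = u * v * u := by
    have h1 : u * (u * v) = (u * v) * u := by
      rw [← ht, ← this]
    calc v = (u * u) * v := by rw [hu2, one_mul]
    _ = u * (u * v) := by rw [mul_assoc]
    _ = u * v * u := h1
  show u * v = v * u
  calc u * v = (u * v * u) * u := by rw [mul_assoc, hu2, mul_one]
  _ = v * u := by rw [← hvu]
end

section
/- Let S be a finite 2-group in which every element x satisfies [x, N_S(⟨x⟩)] = 1, i.e., N_S(⟨x⟩) = C_S(x) for all x. Then Ω₁(S), the subgroup generated by all involutions of S, is elementary abelian. -/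
theorem invol_commute {S : Type*} [Group S]
    (h : ∀ x : S, Subgroup.normalizer (Subgroup.zpowers x : Set S) = Subgroup.centralizer {x})
    {x y : S} (hx : x ^ 2 = 1) (hy : y ^ 2 = 1) : Commute x y := by
  have hyy : y * y = 1 := by rw [← sq, hy]
  have hx' : x⁻¹ = x := by rw [inv_eq_iff_mul_eq_one, ← sq, hx]
  have hy' : y⁻¹ = y := by rw [inv_eq_iff_mul_eq_one, ← sq, hy]
  have hconj : y * (x * y) * y⁻¹ = (x * y)⁻¹ := by
    rw [mul_inv_rev, hx', hy',
      show y * (x * y) * y = y * x * (y * y) from by group, hyy, mul_one]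
  have cza : ∀ k : ℤ, y * (x * y) ^ k * y⁻¹ = (x * y) ^ (-k) := fun k => by
    rw [← conj_zpow, hconj, inv_zpow']
  have hmem : y ∈ Subgroup.normalizer (Subgroup.zpowers (x * y) : Set S) := by
    rw [Subgroup.mem_normalizer_iff]
    intro n
    simp only [Subgroup.mem_zpowers_iff]
    constructor
    · rintro ⟨k, rfl⟩
      exact ⟨-k, (cza k).symm⟩
    · rintro ⟨k, hk⟩
      refine ⟨-k, ?_⟩
      rw [← cza k, hk,
        show y * (y * n * y⁻¹) * y⁻¹ = (y * y) * n * (y * y)⁻¹ from by group,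
        hyy, one_mul, inv_one, mul_one]
  rw [h (x * y)] at hmem
  have hc := Subgroup.mem_centralizer_iff.mp hmem (x * y) rfl
  -- hc : (x*y) * y = y * (x*y)
  have h2 : y * x * y = x := by
    have h3 : x * (y * y) = y * (x * y) := by rw [← mul_assoc]; exact hc
    rw [hyy, mul_one] at h3
    rw [mul_assoc, ← h3]
  show x * y = y * x
  calc x * y = (y * x * y) * y := by rw [h2]
    _ = y * x * (y * y) := by group
    _ = y * x := by rw [hyy, mul_one]

/-- In a finite 2-group `S` with `N_S(⟨x⟩) = C_S(x)` for all `x`,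
`Ω₁(S)`, the subgroup generated by involutions, is elementary abelian. -/
theorem omega1_elementary_abelian
    (S : Type*) [Group S] [Finite S] (hS : IsPGroup 2 S)
    (h : ∀ x : S, Subgroup.normalizer (Subgroup.zpowers x : Set S) = Subgroup.centralizer {x}) :
    (∀ a ∈ Subgroup.closure {x : S | x ^ 2 = 1}, a ^ 2 = 1) ∧
    (∀ a ∈ Subgroup.closure {x : S | x ^ 2 = 1},
      ∀ b ∈ Subgroup.closure {x : S | x ^ 2 = 1}, Commute a b) := by
  have comm : ∀ a ∈ Subgroup.closure {x : S | x ^ 2 = 1},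
      ∀ b ∈ Subgroup.closure {x : S | x ^ 2 = 1}, Commute a b := by
    intro a ha b hb
    induction ha, hb using Subgroup.closure_induction₂ with
    | mem u v hu hv => exact invol_commute h hu hv
    | one_left v hv => exact Commute.one_left v
    | one_right v hv => exact Commute.one_right v
    | mul_left u v w _ _ _ h1 h2 => exact h1.mul_left h2
    | mul_right u v w _ _ _ h1 h2 => exact h1.mul_right h2
    | inv_left u v _ _ h1 => exact h1.inv_left
    | inv_right u v _ _ h1 => exact h1.inv_right
  refine ⟨?_, comm⟩
  intro a ha
  induction ha using Subgroup.closure_induction with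
  | mem u hu => exact hu
  | one => exact one_pow 2
  | mul u v hu hv h1 h2 =>
    rw [(comm u hu v hv).mul_pow, h1, h2, mul_one]
  | inv u hu h1 =>
    rw [inv_pow, h1, inv_one]
end

section
/- Let G be a finite group in which |G : C_G(x)| is odd for every 2-element x, let S be a Sylow 2-subgroup, and set U = Ω₁(S). Then U ≤ Z(S). -/
open Subgroup MulAction Pointwise

set_option linter.unusedSectionVars false
set_option maxHeartbeats 1000000

section OmegaOneCenter

variable {G : Type*} [Group G] [Finite G]

private theorem even_index_aux {C : Subgroup G} {x : G}
    (hxN : x ∈ (Subgroup.normalizer (C : Set G))) (hxC : x ∉ C) (hx2 : x ^ 2 = 1) : 2 ∣ C.index := by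
  have hnorm : (C.subgroupOf (Subgroup.normalizer (C : Set G))).Normal := normal_in_normalizer
  set xbar : (Subgroup.normalizer (C : Set G)) ⧸ C.subgroupOf (Subgroup.normalizer (C : Set G)) := QuotientGroup.mk ⟨x, hxN⟩ with hxbar
  have hx1 : xbar ≠ 1 := by
    rw [hxbar, Ne, QuotientGroup.eq_one_iff, mem_subgroupOf]
    exact hxC
  have hxo : xbar ^ 2 = 1 := by
    rw [hxbar, ← QuotientGroup.mk_pow, QuotientGroup.eq_one_iff, mem_subgroupOf]
    show ((⟨x, hxN⟩ ^ 2 : (Subgroup.normalizer (C : Set G))) : G) ∈ C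
    rw [SubmonoidClass.coe_pow, hx2]
    exact one_mem _
  have horder : orderOf xbar = 2 := orderOf_eq_prime hxo hx1
  have hdvd : 2 ∣ Nat.card ((Subgroup.normalizer (C : Set G)) ⧸ C.subgroupOf (Subgroup.normalizer (C : Set G))) :=
    horder ▸ orderOf_dvd_natCard xbar
  have := Subgroup.relIndex_mul_index (le_normalizer : C ≤ (Subgroup.normalizer (C : Set G)))
  rw [← this]
  exact Dvd.dvd.mul_right hdvd _


private theorem conj_mul_aux {x : G} (hxx : x * x = 1) (a b : G) :
    (x * a * x) * (x * b * x) = x * (a * b) * x := by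
  have h : x * (x * (b * x)) = b * x := by rw [← mul_assoc, hxx, one_mul]
  simp only [mul_assoc, h]

/-- If an involution conjugates a 2-element `w` to `w⁻¹`, then `w ^ 2 = 1`. -/


private theorem sq_one_of_inv_conj
    (hodd : ∀ x : G, (∃ n : ℕ, orderOf x = 2 ^ n) → Odd (Subgroup.centralizer {x}).index)
    {w x : G} (hw : ∃ n : ℕ, orderOf w = 2 ^ n)
    (hx2 : x ^ 2 = 1) (hconj : x * w * x⁻¹ = w⁻¹) : w ^ 2 = 1 := by
  by_contra hne
  have hxx : x * x = 1 := by rw [← pow_two]; exact hx2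
  have hxinv : x⁻¹ = x := by rw [inv_eq_iff_mul_eq_one, hxx]
  rw [hxinv] at hconj
  -- `hconj : x * w * x = w⁻¹`
  have hconj' : x * w⁻¹ * x = w := by
    have h0 := congrArg (fun t => t⁻¹) hconj
    simp only [mul_inv_rev, inv_inv, hxinv] at h0
    simpa [mul_assoc] using h0
  have ffh : ∀ h : G, x * (x * h * x) * x = h := by
    intro h
    have h1 : x * (x * h * x) * x = x * x * h * (x * x) := by simp only [mul_assoc]
    rw [h1, hxx, one_mul, mul_one]
  have aux : ∀ h : G, w * h = h * w → w * (x * h * x) = (x * h * x) * w := by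
    intro h hc
    have hinvc : w⁻¹ * h = h * w⁻¹ := (Commute.inv_left (hc : Commute w h)).eq
    calc w * (x * h * x) = (x * w⁻¹ * x) * (x * h * x) := by rw [hconj']
      _ = x * (w⁻¹ * h) * x := conj_mul_aux hxx _ _
      _ = x * (h * w⁻¹) * x := by rw [hinvc]
      _ = (x * h * x) * (x * w⁻¹ * x) := (conj_mul_aux hxx _ _).symm
      _ = (x * h * x) * w := by rw [hconj']
  have hxC : x ∉ Subgroup.centralizer ({w} : Set G) := by
    intro hx
    rw [Subgroup.mem_centralizer_singleton_iff] at hx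
    -- hx : x * w = w * x
    apply hne
    have h1 : x * w * x = w := by rw [hx, mul_assoc, hxx, mul_one]
    rw [h1] at hconj
    rw [pow_two]
    exact mul_eq_one_iff_eq_inv.mpr hconj
  have hxN : x ∈ (Subgroup.normalizer ((Subgroup.centralizer ({w} : Set G) : Subgroup G) : Set G)) := by
    rw [mem_normalizer_iff]
    intro h
    rw [Subgroup.mem_centralizer_singleton_iff, Subgroup.mem_centralizer_singleton_iff, hxinv]
    constructor
    · intro hc
      exact (aux h hc.symm).symm
    · intro hc
      have h2 := (aux (x * h * x) hc.symm).symm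
      rw [ffh h] at h2
      exact h2
  have h2dvd : 2 ∣ (Subgroup.centralizer ({w} : Set G)).index := even_index_aux hxN hxC hx2
  have h1 := Nat.odd_iff.mp (hodd w hw)
  have h2 := Nat.eq_zero_of_dvd_of_lt h2dvd
  omega


private theorem commute_of_sq_one
    (hodd : ∀ x : G, (∃ n : ℕ, orderOf x = 2 ^ n) → Odd (Subgroup.centralizer {x}).index)
    {x y : G} (hx : x ^ 2 = 1) (hy : y ^ 2 = 1)
    (hxy : ∃ n : ℕ, orderOf (x * y) = 2 ^ n) : x * y = y * x := by
  have hxx : x * x = 1 := by rw [← pow_two]; exact hx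
  have hyy : y * y = 1 := by rw [← pow_two]; exact hy
  have hxinv : x⁻¹ = x := by rw [inv_eq_iff_mul_eq_one, hxx]
  have hyinv : y⁻¹ = y := by rw [inv_eq_iff_mul_eq_one, hyy]
  have hconj : x * (x * y) * x⁻¹ = (x * y)⁻¹ := by
    rw [hxinv, mul_inv_rev, hxinv, hyinv]
    calc x * (x * y) * x = (x * x) * (y * x) := by simp only [mul_assoc]
      _ = y * x := by rw [hxx, one_mul]
  have hsq := sq_one_of_inv_conj hodd hxy hx hconj
  have h2 : (x * y) * (x * y) = 1 := by rw [← pow_two]; exact hsq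
  calc x * y = (x * y)⁻¹ := mul_eq_one_iff_eq_inv.mp h2
    _ = y⁻¹ * x⁻¹ := mul_inv_rev _ _
    _ = y * x := by rw [hxinv, hyinv]

/-- Elements of a Sylow 2-subgroup are 2-elements. -/


private theorem two_elt_of_mem_sylow {R : Sylow 2 G} {x : G} (hx : x ∈ R) :
    ∃ n : ℕ, orderOf x = 2 ^ n := by
  obtain ⟨k, hk⟩ := R.isPGroup' ⟨x, hx⟩
  have hxk : x ^ (2 ^ k) = 1 := by
    have := congrArg (Subtype.val) hk
    simpa using this
  obtain ⟨m, -, hm⟩ := (Nat.dvd_prime_pow Nat.prime_two).mp (orderOf_dvd_of_pow_eq_one hxk)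
  exact ⟨m, hm⟩

/-- The subgroup of a Sylow 2-subgroup consisting of its elements of order at most 2. -/


private def invSub
    (hodd : ∀ x : G, (∃ n : ℕ, orderOf x = 2 ^ n) → Odd (Subgroup.centralizer {x}).index)
    (R : Sylow 2 G) : Subgroup G where
  carrier := {g | g ∈ R ∧ g ^ 2 = 1}
  one_mem' := ⟨one_mem _, one_pow 2⟩
  inv_mem' := fun {g} hg => ⟨inv_mem hg.1, by rw [inv_pow, hg.2, inv_one]⟩
  mul_mem' := by
    intro a b ha hb
    refine ⟨mul_mem ha.1 hb.1, ?_⟩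
    have hc := commute_of_sq_one hodd ha.2 hb.2 (two_elt_of_mem_sylow (mul_mem ha.1 hb.1))
    calc (a * b) ^ 2 = a * (b * a) * b := by rw [pow_two]; simp only [mul_assoc]
      _ = a * (a * b) * b := by rw [← hc]
      _ = (a * a) * (b * b) := by simp only [mul_assoc]
      _ = 1 := by rw [← pow_two, ← pow_two, ha.2, hb.2, one_mul]


private theorem mem_invSub
    {hodd : ∀ x : G, (∃ n : ℕ, orderOf x = 2 ^ n) → Odd (Subgroup.centralizer {x}).index}
    {R : Sylow 2 G} {g : G} : g ∈ invSub hodd R ↔ g ∈ R ∧ g ^ 2 = 1 := Iff.rfl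


private theorem card_invSub_eq
    (hodd : ∀ x : G, (∃ n : ℕ, orderOf x = 2 ^ n) → Odd (Subgroup.centralizer {x}).index)
    (R R' : Sylow 2 G) : Nat.card (invSub hodd R) = Nat.card (invSub hodd R') := by
  have : Fact (Nat.Prime 2) := ⟨Nat.prime_two⟩
  obtain ⟨g, hg⟩ := MulAction.exists_smul_eq G R R'
  have hmem : ∀ y : G, y ∈ R ↔ g * y * g⁻¹ ∈ R' := by
    intro y
    rw [← hg]
    constructor
    · intro hy
      show g * y * g⁻¹ ∈ (g • R : Sylow 2 G).toSubgroup
      rw [Sylow.coe_subgroup_smul]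
      have : (MulAut.conj g) • y ∈ (MulAut.conj g) • R.toSubgroup ↔ y ∈ R.toSubgroup :=
        Subgroup.smul_mem_pointwise_smul_iff
      exact this.mpr hy
    · intro hy
      have hy' : g * y * g⁻¹ ∈ (MulAut.conj g) • R.toSubgroup := by
        rw [← Sylow.coe_subgroup_smul]; exact hy
      have : (MulAut.conj g) • y ∈ (MulAut.conj g) • R.toSubgroup ↔ y ∈ R.toSubgroup :=
        Subgroup.smul_mem_pointwise_smul_iff
      exact this.mp hy'
  refine Nat.card_congr ⟨fun a => ⟨g * a * g⁻¹, (hmem a).mp a.2.1, by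
      rw [conj_pow, a.2.2, mul_one, mul_inv_cancel]⟩,
    fun b => ⟨g⁻¹ * b * g, ?_, ?_⟩, ?_, ?_⟩
  · have := (hmem (g⁻¹ * ↑b * g)).mpr
    apply this
    have h1 : g * (g⁻¹ * ↑b * g) * g⁻¹ = ↑b := by group
    rw [h1]
    exact b.2.1
  · have h2 : (g⁻¹ * ↑b * g) ^ 2 = g⁻¹ * (↑b) ^ 2 * g := by
      have := conj_pow (i := 2) (a := g⁻¹) (b := (b : G))
      simpa using this
    rw [h2, b.2.2, mul_one, inv_mul_cancel]
  · intro a; ext; simp; group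
  · intro b; ext; simp; group


private theorem invSub_eq_of_le
    (hodd : ∀ x : G, (∃ n : ℕ, orderOf x = 2 ^ n) → Odd (Subgroup.centralizer {x}).index)
    (S R : Sylow 2 G) (h : invSub hodd S ≤ R.toSubgroup) :
    invSub hodd R = invSub hodd S := by
  have hle : invSub hodd S ≤ invSub hodd R := fun g hg =>
    mem_invSub.mpr ⟨h hg, (mem_invSub.mp hg).2⟩
  exact (Subgroup.eq_of_le_of_card_ge hle (le_of_eq (card_invSub_eq hodd R S))).symm

/-- Any involution commuting with all of `U = invSub hodd S` lies in `U`. -/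


private theorem U_comm
    (hodd : ∀ x : G, (∃ n : ℕ, orderOf x = 2 ^ n) → Odd (Subgroup.centralizer {x}).index)
    (S : Sylow 2 G) {u v : G} (hu : u ∈ invSub hodd S) (hv : v ∈ invSub hodd S) :
    u * v = v * u := by
  have hu' := mem_invSub.mp hu
  have hv' := mem_invSub.mp hv
  exact commute_of_sq_one hodd hu'.2 hv'.2 (two_elt_of_mem_sylow (mul_mem hu'.1 hv'.1))


private theorem mem_U_of_commute
    (hodd : ∀ x : G, (∃ n : ℕ, orderOf x = 2 ^ n) → Odd (Subgroup.centralizer {x}).index)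
    (S : Sylow 2 G) {τ : G} (hτ : τ ^ 2 = 1)
    (hcomm : ∀ u : G, u ∈ invSub hodd S → τ * u = u * τ) : τ ∈ invSub hodd S := by
  have hττ : τ * τ = 1 := by rw [← pow_two]; exact hτ
  have hτinv : τ⁻¹ = τ := by rw [inv_eq_iff_mul_eq_one, hττ]
  set U := invSub hodd S with hU
  let V : Subgroup G :=
    { carrier := {g | g ∈ U ∨ ∃ u ∈ U, g = u * τ}
      one_mem' := Or.inl (one_mem U)
      inv_mem' := by
        rintro a (ha | ⟨u, hu, rfl⟩)
        · exact Or.inl (inv_mem ha)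
        · refine Or.inr ⟨u⁻¹, inv_mem hu, ?_⟩
          rw [mul_inv_rev, hτinv, hcomm u⁻¹ (inv_mem hu)]
      mul_mem' := by
        rintro a b (ha | ⟨u, hu, rfl⟩) (hb | ⟨v, hv, rfl⟩)
        · exact Or.inl (mul_mem ha hb)
        · refine Or.inr ⟨a * v, mul_mem ha hv, ?_⟩
          rw [mul_assoc]
        · refine Or.inr ⟨u * b, mul_mem hu hb, ?_⟩
          calc (u * τ) * b = u * (τ * b) := by rw [mul_assoc]
            _ = u * (b * τ) := by rw [hcomm b hb]
            _ = (u * b) * τ := by rw [mul_assoc]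
        · refine Or.inl ?_
          have h1 : (u * τ) * (v * τ) = (u * v) * (τ * τ) := by
            calc (u * τ) * (v * τ) = u * (τ * v) * τ := by simp only [mul_assoc]
              _ = u * (v * τ) * τ := by rw [hcomm v hv]
              _ = (u * v) * (τ * τ) := by simp only [mul_assoc]
          rw [h1, hττ, mul_one]
          exact mul_mem hu hv }
  have hVsq : ∀ g : G, g ∈ V → g ^ 2 = 1 := by
    rintro g (hg | ⟨u, hu, rfl⟩)
    · exact (mem_invSub.mp hg).2
    · have hu2 : u * u = 1 := by rw [← pow_two]; exact (mem_invSub.mp hu).2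
      calc (u * τ) ^ 2 = u * (τ * u) * τ := by rw [pow_two]; simp only [mul_assoc]
        _ = u * (u * τ) * τ := by rw [hcomm u hu]
        _ = (u * u) * (τ * τ) := by simp only [mul_assoc]
        _ = 1 := by rw [hu2, hττ, one_mul]
  have hVp : IsPGroup 2 V := by
    intro g
    refine ⟨1, ?_⟩
    have : ((g ^ 2 ^ 1 : V) : G) = 1 := by
      rw [SubmonoidClass.coe_pow]
      simpa using hVsq g g.2
    exact Subtype.ext this
  obtain ⟨R, hVR⟩ := hVp.exists_le_sylow
  have hUV : U ≤ V := fun u hu => Or.inl hu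
  have hUR : U ≤ R.toSubgroup := le_trans hUV hVR
  have heq : invSub hodd R = U := invSub_eq_of_le hodd S R hUR
  have hτV : τ ∈ V := Or.inr ⟨1, one_mem U, by rw [one_mul]⟩
  have : τ ∈ invSub hodd R := mem_invSub.mpr ⟨hVR hτV, hτ⟩
  rw [heq] at this
  exact this


private theorem isPGroup_of_exponent_two {H : Type*} [Group H] (K : Subgroup H)
    (h : ∀ g ∈ K, g ^ 2 = 1) : IsPGroup 2 K := by
  intro g
  refine ⟨1, Subtype.ext ?_⟩
  rw [SubmonoidClass.coe_pow]
  have h2 : ((g : H)) ^ (2 : ℕ) = 1 := h g g.2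
  simpa using h2

/-- Fusion of elements of `U` is controlled by the normalizer of `U`. -/


private theorem fusion_control
    (hodd : ∀ x : G, (∃ n : ℕ, orderOf x = 2 ^ n) → Odd (Subgroup.centralizer {x}).index)
    (S : Sylow 2 G) {z τ : G}
    (hz : z ∈ invSub hodd S) (hτU : τ ∈ invSub hodd S) (hconj : IsConj z τ) :
    ∃ n : G, n ∈ (Subgroup.normalizer ((invSub hodd S : Subgroup G) : Set G)) ∧ n * z * n⁻¹ = τ := by
  classical
  have hfact : Fact (Nat.Prime 2) := ⟨Nat.prime_two⟩
  obtain ⟨c, hc⟩ := isConj_iff.mp hconj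
  set U := invSub hodd S with hUdef
  set Y := Subgroup.centralizer ({τ} : Set G) with hYdef
  have hUY : U ≤ Y := by
    intro u hu
    rw [hYdef, Subgroup.mem_centralizer_singleton_iff]
    exact U_comm hodd S hu hτU
  set U' := U.map (MulAut.conj c).toMonoidHom with hU'def
  have hmemU' : ∀ x : G, x ∈ U' ↔ ∃ u ∈ U, c * u * c⁻¹ = x := by
    intro x
    rw [hU'def, Subgroup.mem_map]
    constructor
    · rintro ⟨u, hu, rfl⟩; exact ⟨u, hu, rfl⟩
    · rintro ⟨u, hu, h⟩; exact ⟨u, hu, h⟩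
  have hU'Y : U' ≤ Y := by
    intro x hx
    obtain ⟨u, hu, rfl⟩ := (hmemU' x).mp hx
    rw [hYdef, Subgroup.mem_centralizer_singleton_iff]
    rw [← hc]
    calc (c * u * c⁻¹) * (c * z * c⁻¹) = c * (u * (c⁻¹ * c) * z) * c⁻¹ := by
          simp only [mul_assoc]
      _ = c * (u * z) * c⁻¹ := by rw [inv_mul_cancel, mul_one]
      _ = c * (z * u) * c⁻¹ := by rw [U_comm hodd S hu hz]
      _ = c * (z * (c⁻¹ * c) * u) * c⁻¹ := by rw [inv_mul_cancel, mul_one]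
      _ = (c * z * c⁻¹) * (c * u * c⁻¹) := by simp only [mul_assoc]
  have hU1p : IsPGroup 2 (U.subgroupOf Y) := by
    apply isPGroup_of_exponent_two
    rintro g hg
    have h1 : (g : G) ^ 2 = 1 := (mem_invSub.mp (mem_subgroupOf.mp hg)).2
    exact Subtype.ext (by rw [SubmonoidClass.coe_pow]; exact h1)
  have hU2p : IsPGroup 2 (U'.subgroupOf Y) := by
    apply isPGroup_of_exponent_two
    rintro g hg
    obtain ⟨u, hu, hcu⟩ := (hmemU' (g : G)).mp (mem_subgroupOf.mp hg)
    have hu2 : u ^ 2 = 1 := (mem_invSub.mp hu).2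
    have h1 : (g : G) ^ 2 = 1 := by
      rw [← hcu, conj_pow, hu2, mul_one, mul_inv_cancel]
    exact Subtype.ext (by rw [SubmonoidClass.coe_pow]; exact h1)
  obtain ⟨Q₁, hQ₁⟩ := hU1p.exists_le_sylow
  obtain ⟨Q₂, hQ₂⟩ := hU2p.exists_le_sylow
  obtain ⟨y, hy⟩ := MulAction.exists_smul_eq (↥Y) Q₂ Q₁
  have hconjmem : ∀ x : ↥Y, x ∈ Q₂ → y * x * y⁻¹ ∈ Q₁ := by
    intro x hx
    rw [← hy]
    show y * x * y⁻¹ ∈ (y • Q₂ : Sylow 2 ↥Y).toSubgroup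
    rw [Sylow.coe_subgroup_smul]
    exact (Subgroup.smul_mem_pointwise_smul_iff (a := MulAut.conj y)).mpr hx
  have hQp : IsPGroup 2 (Q₁.toSubgroup.map Y.subtype) := Q₁.isPGroup'.map _
  obtain ⟨R, hR⟩ := hQp.exists_le_sylow
  have hUR : U ≤ R.toSubgroup := by
    intro u hu
    have h1 : (⟨u, hUY hu⟩ : ↥Y) ∈ U.subgroupOf Y := mem_subgroupOf.mpr hu
    exact hR ⟨⟨u, hUY hu⟩, hQ₁ h1, rfl⟩
  have heq : invSub hodd R = U := invSub_eq_of_le hodd S R hUR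
  set n := (y : G) * c with hndef
  have hyτ : (y : G) * τ = τ * (y : G) :=
    Subgroup.mem_centralizer_singleton_iff.mp y.2
  have hnz : n * z * n⁻¹ = τ := by
    rw [hndef, mul_inv_rev]
    calc (y : G) * c * z * (c⁻¹ * (y : G)⁻¹) = (y : G) * (c * z * c⁻¹) * (y : G)⁻¹ := by
          simp only [mul_assoc]
      _ = (y : G) * τ * (y : G)⁻¹ := by rw [hc]
      _ = τ * ((y : G) * (y : G)⁻¹) := by rw [hyτ]; simp only [mul_assoc]
      _ = τ := by rw [mul_inv_cancel, mul_one]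
  have himg : ∀ h : G, h ∈ U → n * h * n⁻¹ ∈ U := by
    intro h hh
    have hx : c * h * c⁻¹ ∈ U' := (hmemU' _).mpr ⟨h, hh, rfl⟩
    have hxY : c * h * c⁻¹ ∈ Y := hU'Y hx
    have hx2 : (⟨c * h * c⁻¹, hxY⟩ : ↥Y) ∈ U'.subgroupOf Y := mem_subgroupOf.mpr hx
    have hx3 := hconjmem _ (hQ₂ hx2)
    have hx4 : (y : G) * (c * h * c⁻¹) * (y : G)⁻¹ ∈ Q₁.toSubgroup.map Y.subtype := by
      refine ⟨y * ⟨c * h * c⁻¹, hxY⟩ * y⁻¹, hx3, ?_⟩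
      rfl
    have hx5 : n * h * n⁻¹ = (y : G) * (c * h * c⁻¹) * (y : G)⁻¹ := by
      rw [hndef, mul_inv_rev]; simp only [mul_assoc]
    have hx6 : n * h * n⁻¹ ∈ R.toSubgroup := by rw [hx5]; exact hR hx4
    have hx7 : (n * h * n⁻¹) ^ 2 = 1 := by
      rw [conj_pow, (mem_invSub.mp hh).2, mul_one, mul_inv_cancel]
    rw [← heq]
    exact mem_invSub.mpr ⟨hx6, hx7⟩
  have hinj : Function.Injective (MulAut.conj n).toMonoidHom := (MulAut.conj n).injective
  have hmaple : U.map (MulAut.conj n).toMonoidHom ≤ U := by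
    rintro x ⟨u, hu, rfl⟩
    exact himg u hu
  have hcardeq : Nat.card U = Nat.card (U.map (MulAut.conj n).toMonoidHom) :=
    Nat.card_congr (Subgroup.equivMapOfInjective U _ hinj).toEquiv
  have hmapeq : U.map (MulAut.conj n).toMonoidHom = U :=
    Subgroup.eq_of_le_of_card_ge hmaple (le_of_eq hcardeq)
  refine ⟨n, ?_, hnz⟩
  rw [Subgroup.mem_normalizer_iff]
  intro h
  constructor
  · intro hh; exact himg h hh
  · intro hh
    rw [← hmapeq] at hh
    obtain ⟨u, hu, heq2⟩ := hh
    have : u = h := by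
      have h1 : (MulAut.conj n) u = (MulAut.conj n) h := by
        simp only [MulAut.conj_apply] at heq2 ⊢
        exact heq2
      exact (MulAut.conj n).injective h1
    rwa [← this]


private theorem parity_fixed {H : Subgroup G} (hH : IsPGroup 2 H) (P : G → Prop)
    (hstab : ∀ h ∈ H, ∀ g, P g → P (h * g * h⁻¹))
    (hodd' : Odd (Nat.card {g : G // P g})) :
    Odd (Nat.card {g : G // P g ∧ ∀ h ∈ H, h * g = g * h}) := by
  classical
  letI act : MulAction ↥H {g : G // P g} :=
    { smul := fun h g => ⟨h.1 * g.1 * h.1⁻¹, hstab h.1 h.2 g.1 g.2⟩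
      one_smul := fun g => Subtype.ext (by
        show ((1 : ↥H) : G) * g.1 * ((1 : ↥H) : G)⁻¹ = g.1
        simp)
      mul_smul := fun a b g => Subtype.ext (by
        show ((a * b : ↥H) : G) * g.1 * ((a * b : ↥H) : G)⁻¹ = a.1 * (b.1 * g.1 * b.1⁻¹) * a.1⁻¹
        push_cast
        rw [mul_inv_rev]
        simp only [mul_assoc]) }
  have hmod := hH.card_modEq_card_fixedPoints {g : G // P g}
  have he : fixedPoints ↥H {g : G // P g} ≃ {g : G // P g ∧ ∀ h ∈ H, h * g = g * h} :=
    { toFun := fun x => ⟨x.1.1, x.1.2, fun h hh => by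
        have h0 := (mem_fixedPoints.mp x.2) ⟨h, hh⟩
        have h1 : h * x.1.1 * h⁻¹ = x.1.1 := congrArg Subtype.val h0
        calc h * x.1.1 = h * x.1.1 * h⁻¹ * h := by
              rw [mul_assoc (h * x.1.1), inv_mul_cancel, mul_one]
          _ = x.1.1 * h := by rw [h1]⟩
      invFun := fun g => ⟨⟨g.1, g.2.1⟩, mem_fixedPoints.mpr (fun h => Subtype.ext (by
        show h.1 * g.1 * h.1⁻¹ = g.1
        rw [g.2.2 h.1 h.2, mul_assoc, mul_inv_cancel, mul_one]))⟩
      left_inv := fun x => Subtype.ext (Subtype.ext rfl)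
      right_inv := fun g => Subtype.ext rfl }
  have hcards : Nat.card (fixedPoints ↥H {g : G // P g})
      = Nat.card {g : G // P g ∧ ∀ h ∈ H, h * g = g * h} := Nat.card_congr he
  rw [Nat.odd_iff] at hodd' ⊢
  rw [← hcards]
  unfold Nat.ModEq at hmod
  omega

/-- Conjugacy classes of 2-elements have odd cardinality. -/


private theorem odd_card_class
    (hodd : ∀ x : G, (∃ n : ℕ, orderOf x = 2 ^ n) → Odd (Subgroup.centralizer {x}).index)
    {s : G} (hs : ∃ n : ℕ, orderOf s = 2 ^ n) :
    Odd (Nat.card {g : G // IsConj s g}) := by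
  have e1 : {g : G // IsConj s g} ≃ (orbit (ConjAct G) s) :=
    Equiv.subtypeEquivRight (fun g => by rw [ConjAct.mem_orbit_conjAct, isConj_comm])
  have e2 : (orbit (ConjAct G) s) ≃ ConjAct G ⧸ stabilizer (ConjAct G) s :=
    orbitEquivQuotientStabilizer _ _
  have h1 : Nat.card {g : G // IsConj s g} = (stabilizer (ConjAct G) s).index := by
    rw [Nat.card_congr (e1.trans e2), Subgroup.index_eq_card]
  have h2 : (Subgroup.centralizer ({s} : Set G)).index = (stabilizer (ConjAct G) s).index := by
    rw [Subgroup.centralizer_eq_comap_stabilizer]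
    exact Subgroup.index_comap_of_surjective _ (MulEquiv.surjective _)
  rw [h1, ← h2]
  exact hodd s hs


private theorem orderOf_isConj {a b : G} (h : IsConj a b) : orderOf b = orderOf a := by
  obtain ⟨c, hc⟩ := isConj_iff.mp h
  rw [← hc]
  have := MulEquiv.orderOf_eq (MulAut.conj c) a
  simpa [MulAut.conj_apply] using this

/-- An involution normalizing `U` lies in `U`. -/


private theorem mem_U_of_sq_one_of_norm
    (hodd : ∀ x : G, (∃ n : ℕ, orderOf x = 2 ^ n) → Odd (Subgroup.centralizer {x}).index)
    (S : Sylow 2 G) {t : G} (ht2 : t ^ 2 = 1)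
    (htN : t ∈ (Subgroup.normalizer ((invSub hodd S : Subgroup G) : Set G))) : t ∈ invSub hodd S := by
  have htt : t * t = 1 := by rw [← pow_two]; exact ht2
  have htinv : t⁻¹ = t := by rw [inv_eq_iff_mul_eq_one, htt]
  set U := invSub hodd S with hU
  have hnorm : ∀ h : G, h ∈ U ↔ t * h * t ∈ U := by
    intro h
    have := Subgroup.mem_normalizer_iff.mp htN h
    rwa [htinv] at this
  have hconj2 : ∀ a : G, t * (t * a * t) * t = a := by
    intro a
    calc t * (t * a * t) * t = (t * t) * a * (t * t) := by simp only [mul_assoc]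
      _ = a := by rw [htt, one_mul, mul_one]
  let V : Subgroup G :=
    { carrier := {g | g ∈ U ∨ ∃ u ∈ U, g = u * t}
      one_mem' := Or.inl (one_mem U)
      inv_mem' := by
        rintro a (ha | ⟨u, hu, rfl⟩)
        · exact Or.inl (inv_mem ha)
        · refine Or.inr ⟨t * u⁻¹ * t, (hnorm u⁻¹).mp (inv_mem hu), ?_⟩
          rw [mul_inv_rev, htinv]
          calc t * u⁻¹ = t * u⁻¹ * (t * t) := by rw [htt, mul_one]
            _ = (t * u⁻¹ * t) * t := by simp only [mul_assoc]
      mul_mem' := by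
        rintro a b (ha | ⟨u, hu, rfl⟩) (hb | ⟨v, hv, rfl⟩)
        · exact Or.inl (mul_mem ha hb)
        · exact Or.inr ⟨a * v, mul_mem ha hv, by rw [mul_assoc]⟩
        · refine Or.inr ⟨u * (t * b * t), mul_mem hu ((hnorm b).mp hb), ?_⟩
          have h1 : (u * (t * b * t)) * t = u * (t * b * (t * t)) := by simp only [mul_assoc]
          have h2 : u * (t * b * (t * t)) = (u * t) * b := by
            rw [htt, mul_one]; simp only [mul_assoc]
          rw [h1, h2]
        · have h1 : u * t * (v * t) = u * (t * v * t) := by simp only [mul_assoc]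
          exact Or.inl (by rw [h1]; exact mul_mem hu ((hnorm v).mp hv)) }
  have hV4 : ∀ g : G, g ∈ V → g ^ (4 : ℕ) = 1 := by
    rintro g (hg | ⟨u, hu, rfl⟩)
    · have h2 : g ^ 2 = 1 := (mem_invSub.mp hg).2
      have h4 : g ^ (4 : ℕ) = (g ^ 2) ^ 2 := by rw [← pow_mul]
      rw [h4, h2, one_pow]
    · have hsq : (u * t) ^ 2 = u * (t * u * t) := by
        rw [pow_two]; simp only [mul_assoc]
      have hmem2 : (u * t) ^ 2 ∈ U := by
        rw [hsq]; exact mul_mem hu ((hnorm u).mp hu)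
      have h4 : (u * t) ^ (4 : ℕ) = ((u * t) ^ 2) ^ 2 := by rw [← pow_mul]
      rw [h4, (mem_invSub.mp hmem2).2]
  have hVp : IsPGroup 2 V := by
    intro g
    refine ⟨2, Subtype.ext ?_⟩
    rw [SubmonoidClass.coe_pow]
    show (g : G) ^ (2 ^ 2 : ℕ) = ((1 : V) : G)
    norm_num
    exact hV4 g g.2
  obtain ⟨R, hVR⟩ := hVp.exists_le_sylow
  have hUV : U ≤ V := fun u hu => Or.inl hu
  have heq : invSub hodd R = U := invSub_eq_of_le hodd S R (le_trans hUV hVR)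
  have htV : t ∈ V := Or.inr ⟨1, one_mem U, by rw [one_mul]⟩
  have : t ∈ invSub hodd R := mem_invSub.mpr ⟨hVR htV, ht2⟩
  rwa [heq] at this


private theorem no_bad
    (hodd : ∀ x : G, (∃ n : ℕ, orderOf x = 2 ^ n) → Odd (Subgroup.centralizer {x}).index)
    (S : Sylow 2 G) (t : G) (ht2 : ∃ n : ℕ, orderOf t = 2 ^ n)
    (htN : t ∈ (Subgroup.normalizer ((invSub hodd S : Subgroup G) : Set G))) :
    ∀ u ∈ invSub hodd S, t * u = u * t := by
  classical
  by_contra hcon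
  have hbad : ∃ k : ℕ, ∃ b : G, ((∃ n : ℕ, orderOf b = 2 ^ n) ∧ b ∈ (Subgroup.normalizer ((invSub hodd S : Subgroup G) : Set G)) ∧
      ¬(∀ u ∈ invSub hodd S, b * u = u * b)) ∧ orderOf b = k :=
    ⟨orderOf t, t, ⟨ht2, htN, hcon⟩, rfl⟩
  obtain ⟨s, ⟨hs2, hsN, hsC⟩, hsk⟩ := Nat.find_spec hbad
  have hmin : ∀ b : G, (∃ n : ℕ, orderOf b = 2 ^ n) → b ∈ (Subgroup.normalizer ((invSub hodd S : Subgroup G) : Set G)) →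
      ¬(∀ u ∈ invSub hodd S, b * u = u * b) → orderOf s ≤ orderOf b := by
    intro b h1 h2 h3
    rw [hsk]
    exact Nat.find_min' hbad ⟨b, ⟨h1, h2, h3⟩, rfl⟩
  set U := invSub hodd S with hUdef
  obtain ⟨k, hk⟩ := hs2
  rcases Nat.lt_or_ge k 2 with hklt | hk2
  · interval_cases k
    · have hs1 : s = 1 := orderOf_eq_one_iff.mp (by rw [hk]; norm_num)
      exact hsC (fun u _ => by rw [hs1, one_mul, mul_one])
    · have hs2' : s ^ 2 = 1 := by
        rw [← pow_one 2, ← hk]; exact pow_orderOf_eq_one s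
      have hsU := mem_U_of_sq_one_of_norm hodd S hs2' hsN
      exact hsC (fun u hu => U_comm hodd S hsU hu)
  -- main case : `k ≥ 2`
  set z := s ^ (2 ^ (k - 1)) with hzdef
  have hkk : 2 ^ (k - 1) * 2 = 2 ^ k := by
    have h1 : k - 1 + 1 = k := by omega
    rw [← pow_succ, h1]
  have hz2 : z ^ 2 = 1 := by
    rw [hzdef, ← pow_mul, hkk, ← hk]; exact pow_orderOf_eq_one s
  have hs2small : orderOf (s ^ 2) ∣ 2 ^ (k - 1) := by
    apply orderOf_dvd_of_pow_eq_one
    rw [← pow_mul, mul_comm 2 (2 ^ (k - 1)), hkk, ← hk]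
    exact pow_orderOf_eq_one s
  have hs2C : ∀ u ∈ U, s ^ 2 * u = u * s ^ 2 := by
    by_contra hc
    have h2elt : ∃ n : ℕ, orderOf (s ^ 2) = 2 ^ n := by
      obtain ⟨m, -, hm⟩ := (Nat.dvd_prime_pow Nat.prime_two).mp hs2small
      exact ⟨m, hm⟩
    have hle := hmin (s ^ 2) h2elt (pow_mem hsN 2) hc
    have hle2 : orderOf (s ^ 2) ≤ 2 ^ (k - 1) :=
      Nat.le_of_dvd (Nat.pow_pos (n := _) (by norm_num)) hs2small
    rw [hk] at hle
    have : (2 : ℕ) ^ (k - 1) < 2 ^ k := Nat.pow_lt_pow_right (by norm_num) (by omega)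
    omega
  have hzC : ∀ u ∈ U, z * u = u * z := by
    intro u hu
    have h1 : z = (s ^ 2) ^ (2 ^ (k - 2)) := by
      rw [hzdef, ← pow_mul]
      congr 1
      have h2 : k - 2 + 1 = k - 1 := by omega
      calc 2 ^ (k - 1) = 2 ^ (k - 2 + 1) := by rw [h2]
        _ = 2 ^ (k - 2) * 2 := by rw [pow_succ]
        _ = 2 * 2 ^ (k - 2) := by rw [mul_comm]
    rw [h1]
    exact (Commute.pow_left (hs2C u hu) _).eq
  have hzU : z ∈ U := mem_U_of_commute hodd S hz2 (fun u hu => hzC u hu)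
  have hUp : IsPGroup 2 U := isPGroup_of_exponent_two U (fun g hg => (mem_invSub.mp hg).2)
  have hAodd : Odd (Nat.card {g : G // IsConj s g ∧ ∀ h ∈ U, h * g = g * h}) := by
    refine parity_fixed hUp (fun g => IsConj s g) ?_ (odd_card_class hodd ⟨k, hk⟩)
    intro h _ g hg
    exact hg.trans (isConj_iff.mpr ⟨h, rfl⟩)
  -- transfer of the commuting property under conjugation by normalizer elements
  have htrans : ∀ m : G, m ∈ (Subgroup.normalizer (U : Set G)) → ∀ g : G, (∀ h ∈ U, h * g = g * h) →
      ∀ h ∈ U, h * (m⁻¹ * g * m) = (m⁻¹ * g * m) * h := by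
    intro m hm g hg h hh
    have hmem : m * h * m⁻¹ ∈ U := (Subgroup.mem_normalizer_iff.mp hm h).mp hh
    have h1 := hg _ hmem
    have e1 : h * (m⁻¹ * g * m) = m⁻¹ * ((m * h * m⁻¹) * g) * m := by group
    have e2 : m⁻¹ * (g * (m * h * m⁻¹)) * m = (m⁻¹ * g * m) * h := by group
    rw [e1, h1, e2]
  have hτdata : ∀ g : G, IsConj s g → (∀ h ∈ U, h * g = g * h) →
      (g ^ 2 ^ (k - 1)) ∈ U ∧ IsConj z (g ^ 2 ^ (k - 1)) := by
    intro g hgconj hgcomm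
    obtain ⟨c, hc⟩ := isConj_iff.mp hgconj
    have hpow : g ^ 2 ^ (k - 1) = c * z * c⁻¹ := by
      rw [← hc, conj_pow, hzdef]
    have hgo : orderOf g = 2 ^ k := by rw [orderOf_isConj hgconj, hk]
    have hτ2 : (g ^ 2 ^ (k - 1)) ^ 2 = 1 := by
      rw [← pow_mul, hkk, ← hgo]; exact pow_orderOf_eq_one g
    have hτcomm : ∀ u : G, u ∈ U → (g ^ 2 ^ (k - 1)) * u = u * (g ^ 2 ^ (k - 1)) := by
      intro u hu
      have hcu : Commute u g := hgcomm u hu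
      exact ((hcu.pow_right _).symm).eq
    exact ⟨mem_U_of_commute hodd S hτ2 hτcomm, isConj_iff.mpr ⟨c, hpow.symm⟩⟩
  set T := {x : G // ∃ m : G, m ∈ (Subgroup.normalizer (U : Set G)) ∧ m * z * m⁻¹ = x} with hTdef
  set π : {g : G // IsConj s g ∧ ∀ h ∈ U, h * g = g * h} → T := fun g =>
    ⟨g.1 ^ 2 ^ (k - 1), by
      obtain ⟨hU1, hconj1⟩ := hτdata g.1 g.2.1 g.2.2
      obtain ⟨n, hnN, hnz⟩ := fusion_control hodd S hzU hU1 hconj1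
      exact ⟨n, hnN, hnz⟩⟩ with hπdef
  have hfib : ∀ t : T, {a : {g : G // IsConj s g ∧ ∀ h ∈ U, h * g = g * h} // π a = t} ≃
      {g : G // (IsConj s g ∧ ∀ h ∈ U, h * g = g * h) ∧ g ^ 2 ^ (k - 1) = z} := by
    intro t
    set m := Classical.choose t.2 with hmdef
    have hm := Classical.choose_spec t.2
    have hmN : m ∈ (Subgroup.normalizer (U : Set G)) := hm.1
    have hmz : m * z * m⁻¹ = t.1 := hm.2
    have hconjpow : ∀ g : G, (m⁻¹ * g * m) ^ 2 ^ (k - 1) = m⁻¹ * g ^ 2 ^ (k - 1) * m := by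
      intro g
      have h0 := conj_pow (i := 2 ^ (k - 1)) (a := m⁻¹) (b := g)
      simpa only [inv_inv] using h0
    have fwd : ∀ g : G, (IsConj s g ∧ ∀ h ∈ U, h * g = g * h) → g ^ 2 ^ (k - 1) = t.1 →
        (IsConj s (m⁻¹ * g * m) ∧ ∀ h ∈ U, h * (m⁻¹ * g * m) = (m⁻¹ * g * m) * h) ∧
          (m⁻¹ * g * m) ^ 2 ^ (k - 1) = z := by
      intro g hg hgt
      refine ⟨⟨hg.1.trans (isConj_iff.mpr ⟨m⁻¹, by rw [inv_inv]⟩), htrans m hmN g hg.2⟩, ?_⟩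
      rw [hconjpow g, hgt, ← hmz]
      group
    have bwdconj : ∀ g : G, IsConj s g → IsConj s (m * g * m⁻¹) := by
      intro g hg
      exact hg.trans (isConj_iff.mpr ⟨m, rfl⟩)
    have bwdcomm : ∀ g : G, (∀ h ∈ U, h * g = g * h) →
        ∀ h ∈ U, h * (m * g * m⁻¹) = (m * g * m⁻¹) * h := by
      intro g hg
      have h0 := htrans m⁻¹ (inv_mem hmN) g hg
      simpa only [inv_inv] using h0
    have bwdpow : ∀ g : G, g ^ 2 ^ (k - 1) = z → (m * g * m⁻¹) ^ 2 ^ (k - 1) = t.1 := by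
      intro g hg
      rw [conj_pow, hg, hmz]
    refine
      { toFun := fun a => ⟨m⁻¹ * a.1.1 * m, fwd a.1.1 a.1.2 (congrArg Subtype.val a.2)⟩
        invFun := fun b => ⟨⟨m * b.1 * m⁻¹, bwdconj b.1 b.2.1.1, bwdcomm b.1 b.2.1.2⟩,
          Subtype.ext (bwdpow b.1 b.2.2)⟩
        left_inv := fun a => Subtype.ext (Subtype.ext ?_)
        right_inv := fun b => Subtype.ext ?_ }
    · show m * (m⁻¹ * a.1.1 * m) * m⁻¹ = a.1.1
      group
    · show m⁻¹ * (m * b.1 * m⁻¹) * m = b.1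
      group
  have hsigma : Nat.card {g : G // IsConj s g ∧ ∀ h ∈ U, h * g = g * h} =
      Nat.card T * Nat.card {g : G // (IsConj s g ∧ ∀ h ∈ U, h * g = g * h) ∧
        g ^ 2 ^ (k - 1) = z} := by
    have e1 := (Equiv.sigmaFiberEquiv π).symm
    have e2 := Equiv.sigmaCongrRight hfib
    have e3 := Equiv.sigmaEquivProd T
      {g : G // (IsConj s g ∧ ∀ h ∈ U, h * g = g * h) ∧ g ^ 2 ^ (k - 1) = z}
    rw [Nat.card_congr ((e1.trans e2).trans e3), Nat.card_prod]
  have hBodd : Odd (Nat.card {g : G // (IsConj s g ∧ ∀ h ∈ U, h * g = g * h) ∧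
      g ^ 2 ^ (k - 1) = z}) := by
    rw [hsigma] at hAodd
    exact (Nat.odd_mul.mp hAodd).2
  -- act with `⟨s⟩` on the fibre over `z`
  have hzpN : Subgroup.zpowers s ≤ (Subgroup.normalizer (U : Set G)) := Subgroup.zpowers_le.mpr hsN
  have hzpP : IsPGroup 2 (Subgroup.zpowers s) :=
    IsPGroup.of_card (by rw [Nat.card_zpowers, hk])
  have hstab : ∀ h ∈ Subgroup.zpowers s, ∀ g : G,
      ((IsConj s g ∧ ∀ h' ∈ U, h' * g = g * h') ∧ g ^ 2 ^ (k - 1) = z) →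
      ((IsConj s (h * g * h⁻¹) ∧ ∀ h' ∈ U, h' * (h * g * h⁻¹) = (h * g * h⁻¹) * h') ∧
        (h * g * h⁻¹) ^ 2 ^ (k - 1) = z) := by
    intro h hh g hg
    have hcomm' : ∀ h' ∈ U, h' * (h * g * h⁻¹) = (h * g * h⁻¹) * h' := by
      have h0 := htrans h⁻¹ (inv_mem (hzpN hh)) g hg.1.2
      simpa only [inv_inv] using h0
    have hzh : h * z = z * h := by
      obtain ⟨j, rfl⟩ := Subgroup.mem_zpowers_iff.mp hh
      rw [hzdef]
      exact (((Commute.refl s).zpow_left j).pow_right _).eq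
    refine ⟨⟨hg.1.1.trans (isConj_iff.mpr ⟨h, rfl⟩), hcomm'⟩, ?_⟩
    rw [conj_pow, hg.2]
    rw [hzh, mul_assoc, mul_inv_cancel, mul_one]
  have hfinal := parity_fixed hzpP
    (fun g => (IsConj s g ∧ ∀ h ∈ U, h * g = g * h) ∧ g ^ 2 ^ (k - 1) = z) hstab hBodd
  have hne : Nonempty {g : G // ((IsConj s g ∧ ∀ h ∈ U, h * g = g * h) ∧
      g ^ 2 ^ (k - 1) = z) ∧ ∀ h ∈ Subgroup.zpowers s, h * g = g * h} := by
    by_contra hemp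
    rw [not_nonempty_iff] at hemp
    rw [Nat.card_of_isEmpty] at hfinal
    norm_num at hfinal
  obtain ⟨⟨y₀, ⟨⟨hyconj, hycomm⟩, hypow⟩, hyzp⟩⟩ := hne
  have hsy : s * y₀ = y₀ * s := hyzp s (Subgroup.mem_zpowers s)
  -- the element `d = s * y₀⁻¹` contradicts minimality
  have hcy : Commute s y₀⁻¹ := (show Commute s y₀ from hsy).inv_right
  have hdpow : (s * y₀⁻¹) ^ 2 ^ (k - 1) = 1 := by
    rw [hcy.mul_pow, inv_pow, hypow]
    rw [← hzdef, mul_inv_cancel]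
  have hddvd : orderOf (s * y₀⁻¹) ∣ 2 ^ (k - 1) := orderOf_dvd_of_pow_eq_one hdpow
  have hd2elt : ∃ n : ℕ, orderOf (s * y₀⁻¹) = 2 ^ n := by
    obtain ⟨m, -, hm⟩ := (Nat.dvd_prime_pow Nat.prime_two).mp hddvd
    exact ⟨m, hm⟩
  have hyN : y₀ ∈ (Subgroup.normalizer (U : Set G)) := by
    rw [Subgroup.mem_normalizer_iff]
    intro h
    constructor
    · intro hh
      have h1 : y₀ * h * y₀⁻¹ = h := by
        rw [← hycomm h hh, mul_assoc, mul_inv_cancel, mul_one]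
      rwa [h1]
    · intro hh
      have h1 : h = y₀⁻¹ * (y₀ * h * y₀⁻¹) * y₀ := by group
      have h2 := hycomm _ hh
      -- h2 : (y₀ h y₀⁻¹) * y₀ = y₀ * (y₀ h y₀⁻¹)
      have h3 : y₀⁻¹ * (y₀ * h * y₀⁻¹) * y₀ = y₀ * h * y₀⁻¹ := by
        have e1 : y₀⁻¹ * (y₀ * h * y₀⁻¹) * y₀ = y₀⁻¹ * ((y₀ * h * y₀⁻¹) * y₀) := by
          simp only [mul_assoc]
        rw [e1, h2]
        group
      rw [h1, h3]
      exact hh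
  have hdN : s * y₀⁻¹ ∈ (Subgroup.normalizer (U : Set G)) := mul_mem hsN (inv_mem hyN)
  have hdC : ¬(∀ u ∈ U, (s * y₀⁻¹) * u = u * (s * y₀⁻¹)) := by
    intro hd
    apply hsC
    intro u hu
    have h2 := hd u hu
    have h3 := hycomm u hu  -- u * y₀ = y₀ * u
    calc s * u = (s * y₀⁻¹) * (y₀ * u) := by group
      _ = (s * y₀⁻¹) * (u * y₀) := by rw [← h3]
      _ = ((s * y₀⁻¹) * u) * y₀ := by simp only [mul_assoc]
      _ = (u * (s * y₀⁻¹)) * y₀ := by rw [h2]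
      _ = u * ((s * y₀⁻¹) * y₀) := by simp only [mul_assoc]
      _ = u * s := by group
  have hle := hmin (s * y₀⁻¹) hd2elt hdN hdC
  have hle2 : orderOf (s * y₀⁻¹) ≤ 2 ^ (k - 1) :=
    Nat.le_of_dvd (Nat.pow_pos (n := _) (by norm_num)) hddvd
  rw [hk] at hle
  have hlt : (2 : ℕ) ^ (k - 1) < 2 ^ k := Nat.pow_lt_pow_right (by norm_num) (by omega)
  omega


end OmegaOneCenter

/-- If `|G : C_G(x)|` is odd for every 2-element `x` of a finite group `G` and
`S` is a Sylow 2-subgroup, then `Ω₁(S) ≤ Z(S)`. -/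
theorem omega1_le_center
    (G : Type*) [Group G] [Finite G]
    (hodd : ∀ x : G, (∃ n : ℕ, orderOf x = 2 ^ n) → Odd (Subgroup.centralizer {x}).index)
    (S : Sylow 2 G) :
    Subgroup.closure {x : (S : Subgroup G) | x ^ 2 = 1} ≤
      Subgroup.center (S : Subgroup G) := by
  rw [Subgroup.closure_le]
  intro x hx
  have hx2 : x ^ 2 = 1 := hx
  rw [SetLike.mem_coe, Subgroup.mem_center_iff]
  intro t
  have hxU : (x : G) ∈ invSub hodd S := by
    refine mem_invSub.mpr ⟨x.2, ?_⟩
    have h1 : ((x ^ 2 : (S : Subgroup G)) : G) = 1 := by rw [hx2]; rfl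
    rwa [SubmonoidClass.coe_pow] at h1
  have htN : (t : G) ∈ (Subgroup.normalizer ((invSub hodd S : Subgroup G) : Set G)) := by
    rw [Subgroup.mem_normalizer_iff]
    intro h
    constructor
    · intro hh
      refine mem_invSub.mpr ⟨mul_mem (mul_mem t.2 (mem_invSub.mp hh).1) (inv_mem t.2), ?_⟩
      rw [conj_pow, (mem_invSub.mp hh).2, mul_one, mul_inv_cancel]
    · intro hh
      have h1 : h = (t : G)⁻¹ * ((t : G) * h * (t : G)⁻¹) * (t : G) := by group
      rw [h1]
      refine mem_invSub.mpr
        ⟨mul_mem (mul_mem (inv_mem t.2) (mem_invSub.mp hh).1) t.2, ?_⟩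
      have h0 := conj_pow (i := 2) (a := (t : G)⁻¹) (b := (t : G) * h * (t : G)⁻¹)
      rw [inv_inv] at h0
      rw [h0, (mem_invSub.mp hh).2, mul_one, inv_mul_cancel]
  have ht2 : ∃ n : ℕ, orderOf (t : G) = 2 ^ n := two_elt_of_mem_sylow t.2
  have hcomm := no_bad hodd S (t : G) ht2 htN (x : G) hxU
  exact Subtype.ext hcomm
end

section
/- Let G be a finite group and S a Sylow 2-subgroup. If every element of S is G-conjugate to an element of Z(S), then N_S(⟨x⟩) = C_S(x) for every x ∈ S. -/
/-- An element commuting with `b` normalizes `⟨b⟩`. -/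
lemma aux_mem_normalizer_zpowers {G : Type*} [Group G] {a b : G} (hab : a * b = b * a) :
    a ∈ Subgroup.normalizer ((Subgroup.zpowers b : Subgroup G) : Set G) := by
  have hc : Commute a b := hab
  have key : ∀ c : G, c ∈ Subgroup.zpowers b → a * c * a⁻¹ = c := by
    intro c hcm
    obtain ⟨m, rfl⟩ := Subgroup.mem_zpowers_iff.mp hcm
    rw [(hc.zpow_right m).eq, mul_assoc, mul_inv_cancel, mul_one]
  have key' : ∀ c : G, c ∈ Subgroup.zpowers b → a⁻¹ * c * a⁻¹⁻¹ = c := by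
    intro c hcm
    obtain ⟨m, rfl⟩ := Subgroup.mem_zpowers_iff.mp hcm
    rw [((hc.zpow_right m).inv_left).eq, mul_assoc, mul_inv_cancel, mul_one]
  rw [Subgroup.mem_normalizer_iff]
  intro t
  constructor
  · intro ht; rw [key t ht]; exact ht
  · intro ht
    have h2 : a⁻¹ * (a * t * a⁻¹) * a⁻¹⁻¹ = t := by group
    have h3 := key' _ ht
    rw [h2] at h3
    rw [h3]; exact ht

/-- If every element of a Sylow 2-subgroup `S` of `G` is `G`-conjugate to an
element of `Z(S)`, then `N_S(⟨x⟩) = C_S(x)` for every `x ∈ S`. -/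
theorem normalizer_eq_centralizer_of_fusion
    (G : Type*) [Group G] [Finite G] (S : Sylow 2 G)
    (hfus : ∀ x ∈ (S : Subgroup G), ∃ g : G,
      g⁻¹ * x * g ∈ Subgroup.centralizer ((S : Subgroup G) : Set G) ⊓ S) :
    ∀ x ∈ (S : Subgroup G),
      Subgroup.normalizer ((Subgroup.zpowers x : Subgroup G) : Set G) ⊓ (S : Subgroup G) =
        Subgroup.centralizer {x} ⊓ (S : Subgroup G) := by
  haveI : Fact (Nat.Prime 2) := ⟨Nat.prime_two⟩
  intro x hx
  refine le_antisymm ?_ (inf_le_inf_right _ fun c hc => aux_mem_normalizer_zpowers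
    (Subgroup.mem_centralizer_iff.mp hc x rfl).symm)
  intro y hy
  obtain ⟨hyN, hyS⟩ := Subgroup.mem_inf.mp hy
  obtain ⟨g, hg⟩ := hfus x hx
  obtain ⟨hzC, hzS⟩ := Subgroup.mem_inf.mp hg
  set f : G ≃* G := MulAut.conj g⁻¹ with hf
  have hfx : f x = g⁻¹ * x * g := by
    simp [hf, MulAut.conj_apply]
  rw [← hfx] at hzC hzS
  set N : Subgroup G := Subgroup.normalizer ((Subgroup.zpowers (f x) : Subgroup G) : Set G) with hN
  have hSN : (S : Subgroup G) ≤ N := fun s hs =>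
    aux_mem_normalizer_zpowers (Subgroup.mem_centralizer_iff.mp hzC s hs)
  set S' : Sylow 2 N := S.subtype hSN with hS'
  set P : Subgroup G := Subgroup.normalizer ((Subgroup.zpowers x : Subgroup G) : Set G) ⊓ S with hP
  set Q : Subgroup G := P.map f.toMonoidHom with hQ
  have hQN : Q ≤ N := by
    calc Q ≤ (Subgroup.normalizer ((Subgroup.zpowers x : Subgroup G) : Set G)).map f.toMonoidHom :=
          Subgroup.map_mono inf_le_left
      _ = N := by
          rw [Subgroup.map_equiv_normalizer_eq, MonoidHom.map_zpowers]
          rfl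
  have hPp : IsPGroup 2 P := S.2.to_inf_right
  have hQp : IsPGroup 2 Q := hPp.map f.toMonoidHom
  have hQ'p : IsPGroup 2 (Q.subgroupOf N) := hQp.comap_subtype
  obtain ⟨R, hQR⟩ := hQ'p.exists_le_sylow
  obtain ⟨n, hn⟩ := MulAction.exists_smul_eq N R S'
  have hqQ : f y ∈ Q := ⟨y, Subgroup.mem_inf.mpr ⟨hyN, hyS⟩, rfl⟩
  have hqN : f y ∈ N := hQN hqQ
  have hqR : (⟨f y, hqN⟩ : N) ∈ (R : Subgroup N) := hQR (Subgroup.mem_subgroupOf.mpr hqQ)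
  have h4 : (MulAut.conj n) (⟨f y, hqN⟩ : N) ∈ ((n • R : Sylow 2 N) : Subgroup N) := by
    rw [Sylow.coe_subgroup_smul]
    exact Subgroup.smul_mem_pointwise_smul _ _ _ hqR
  rw [hn, hS', Sylow.coe_subtype] at h4
  have h5 : (↑n : G) * f y * (↑n : G)⁻¹ ∈ (S : Subgroup G) := by
    have := Subgroup.mem_subgroupOf.mp h4
    simpa [MulAut.conj_apply] using this
  have hexZ : (↑n : G) * f x * (↑n : G)⁻¹ ∈ Subgroup.zpowers (f x) :=
    (Subgroup.mem_normalizer_iff.mp n.2 _).mp (Subgroup.mem_zpowers _)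
  have hexC : (↑n : G) * f x * (↑n : G)⁻¹ ∈
      Subgroup.centralizer ((S : Subgroup G) : Set G) :=
    Subgroup.zpowers_le.mpr hzC hexZ
  have hcomm : ((↑n : G) * f y * (↑n : G)⁻¹) * ((↑n : G) * f x * (↑n : G)⁻¹) =
      ((↑n : G) * f x * (↑n : G)⁻¹) * ((↑n : G) * f y * (↑n : G)⁻¹) :=
    Subgroup.mem_centralizer_iff.mp hexC _ h5
  have h6 : f y * f x = f x * f y := by
    have h := hcomm
    simp only [mul_assoc, inv_mul_cancel_left, mul_right_inj] at h
    rw [← mul_assoc, ← mul_assoc] at h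
    exact mul_right_cancel h
  have h7 : y * x = x * y := by
    have := h6
    rw [← map_mul, ← map_mul] at this
    exact f.injective this
  exact Subgroup.mem_inf.mpr ⟨Subgroup.mem_centralizer_iff.mpr
    (by rintro a rfl; exact h7.symm), hyS⟩
end
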